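/- Let κ be a regular uncountable cardinal and λ ≥ κ a cardinal. Then I_IT[κ,λ] ⊆ I_IS[κ,λ]. -/

import Mathlib

open Cardinal Set

/-! Combinatorial framework: `P_κ λ`, clubs, stationarity, thin/slender lists,
branches, the principles `TP`, `SP`, `ITP`, `ISP`, the ideals `I_IT`, `I_IS`,
ultrafilter notions, ordinal clubs, and square sequences. -/

/-- `P_κ λ`: the collection of subsets of (the set of ordinals below) `λ` of size `< κ`. -/
def Pk (κ lam : Cardinal.{0}) : Set (Set Ordinal.{0}) :=
  {a | (∀ α ∈ a, α < lam.ord) ∧ #a < Cardinal.lift.{1} κ}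

/-- `C` is club in `P_κ X` (represented by `S`, a collection of subsets of `X`):
cofinal in `(S, ⊆)` and closed under unions of `⊆`-increasing chains of length `< κ`. -/
def IsClubIn {X : Type*} (κ : Cardinal.{0}) (S : Set (Set X)) (C : Set (Set X)) : Prop :=
  C ⊆ S ∧ (∀ a ∈ S, ∃ c ∈ C, a ⊆ c) ∧
    ∀ δ : Ordinal.{0}, 0 < δ → δ.card < κ →
      ∀ f : Ordinal.{0} → Set X, (∀ β < δ, f β ∈ C) →
        (∀ β γ, β ≤ γ → γ < δ → f β ⊆ f γ) →
        (⋃ β ∈ Set.Iio δ, f β) ∈ C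

/-- `T` is stationary in `P_κ X`: it meets every club. -/
def IsStatIn {X : Type*} (κ : Cardinal.{0}) (S T : Set (Set X)) : Prop :=
  T ⊆ S ∧ ∀ C, IsClubIn κ S C → (T ∩ C).Nonempty

/-- A `P_κ λ`-list: `d a ⊆ a` for every `a ∈ P_κ λ`. -/
def IsList (κ lam : Cardinal) (d : Set Ordinal → Set Ordinal) : Prop :=
  ∀ a ∈ Pk κ lam, d a ⊆ a

/-- A thin `P_κ λ`-list: on a club of `c`'s, `|{d_a ∩ c : c ⊆ a ∈ P_κ λ}| < κ`. -/
def IsThin (κ lam : Cardinal) (d : Set Ordinal → Set Ordinal) : Prop :=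
  ∃ C, IsClubIn κ (Pk κ lam) C ∧
    ∀ c ∈ C, #{x : Set Ordinal | ∃ a ∈ Pk κ lam, c ⊆ a ∧ x = d a ∩ c} < Cardinal.lift.{1} κ

/-- `H_θ`: sets hereditarily of cardinality `< θ`. -/
def HSet (θ : Cardinal.{0}) : Set ZFSet.{0} :=
  {x | ZFSet.Hereditarily (fun y => #y.toSet < Cardinal.lift.{1} θ) x}

/-- `x` is the von Neumann ordinal corresponding to the ordinal `α`. -/
def IsOrdZF (x : ZFSet) (α : Ordinal) : Prop :=
  x.IsOrdinal ∧ x.rank = α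

/-- The ZFC set `x` codes the set of ordinals `b`. -/
def CodesSet (x : ZFSet) (b : Set Ordinal) : Prop :=
  ∀ y, y ∈ x ↔ ∃ α ∈ b, IsOrdZF y α

/-- `M ∩ λ`: the set of ordinals below `λ` whose von Neumann code lies in `M`. -/
def ordsOf (lam : Cardinal) (M : Set ZFSet) : Set Ordinal :=
  {α | α < lam.ord ∧ ∃ x ∈ M, IsOrdZF x α}

/-- A slender `P_κ λ`-list: for every sufficiently large regular `θ` there is a club
`C ⊆ P_κ H_θ` such that `d_{M ∩ λ} ∩ b ∈ M` for all `M ∈ C` and all countable `b ∈ M`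
with `b ⊆ λ`. -/
def IsSlender (κ lam : Cardinal) (d : Set Ordinal → Set Ordinal) : Prop :=
  ∃ θ₀ : Cardinal, ∀ θ, θ₀ ≤ θ → θ.IsRegular →
    ∃ C, IsClubIn κ {M : Set ZFSet.{0} | M ⊆ HSet θ ∧ #M < Cardinal.lift.{1} κ} C ∧
      ∀ M ∈ C, ∀ b : Set Ordinal, b.Countable → (∀ α ∈ b, α < lam.ord) →
        (∃ x ∈ M, CodesSet x b) →
        ∃ x ∈ M, CodesSet x (d (ordsOf lam M) ∩ b)

/-- `e` is a cofinal branch of the list `d`. -/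
def IsCofBranch (κ lam : Cardinal) (d : Set Ordinal → Set Ordinal) (e : Set Ordinal) : Prop :=
  (∀ α ∈ e, α < lam.ord) ∧
    ∀ a ∈ Pk κ lam, ∃ z ∈ Pk κ lam, a ⊆ z ∧ e ∩ a = d z ∩ a

/-- `e` is an ineffable branch of the list `d`. -/
def IsIneffBranch (κ lam : Cardinal) (d : Set Ordinal → Set Ordinal) (e : Set Ordinal) : Prop :=
  (∀ α ∈ e, α < lam.ord) ∧
    IsStatIn κ (Pk κ lam) {a ∈ Pk κ lam | e ∩ a = d a}

/-- `TP(κ,λ)`: every thin `P_κ λ`-list has a cofinal branch. -/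
def TP (κ lam : Cardinal) : Prop :=
  ∀ d, IsList κ lam d → IsThin κ lam d → ∃ e, IsCofBranch κ lam d e

/-- `SP(κ,λ)`: every slender `P_κ λ`-list has a cofinal branch. -/
def SP (κ lam : Cardinal) : Prop :=
  ∀ d, IsList κ lam d → IsSlender κ lam d → ∃ e, IsCofBranch κ lam d e

/-- `ITP(κ,λ)`: every thin `P_κ λ`-list has an ineffable branch. -/
def ITP (κ lam : Cardinal) : Prop :=
  ∀ d, IsList κ lam d → IsThin κ lam d → ∃ e, IsIneffBranch κ lam d e

/-- `ISP(κ,λ)`: every slender `P_κ λ`-list has an ineffable branch. -/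
def ISP (κ lam : Cardinal) : Prop :=
  ∀ d, IsList κ lam d → IsSlender κ lam d → ∃ e, IsIneffBranch κ lam d e

/-- The list `d` is `A`-effable. -/
def IsEffable (κ lam : Cardinal) (d : Set Ordinal → Set Ordinal) (A : Set (Set Ordinal)) : Prop :=
  ∀ S, S ⊆ A → IsStatIn κ (Pk κ lam) S →
    ∃ a ∈ S, ∃ b ∈ S, a ⊆ b ∧ d a ≠ d b ∩ a

/-- The ideal `I_IT[κ,λ]`. -/
def IIT (κ lam : Cardinal) : Set (Set (Set Ordinal)) :=
  {A | A ⊆ Pk κ lam ∧ ∃ d, IsList κ lam d ∧ IsThin κ lam d ∧ IsEffable κ lam d A}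

/-- The ideal `I_IS[κ,λ]`. -/
def IIS (κ lam : Cardinal) : Set (Set (Set Ordinal)) :=
  {A | A ⊆ Pk κ lam ∧ ∃ d, IsList κ lam d ∧ IsSlender κ lam d ∧ IsEffable κ lam d A}

/-- The filter `F_IT[κ,λ]` dual to `I_IT[κ,λ]`. -/
def FIT (κ lam : Cardinal) : Set (Set (Set Ordinal)) :=
  {A | A ⊆ Pk κ lam ∧ (Pk κ lam \ A) ∈ IIT κ lam}

/-- `U` is an ultrafilter on the set `X`. -/
def IsUFOn {α : Type*} (X : Set α) (U : Set (Set α)) : Prop :=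
  (∀ A ∈ U, A ⊆ X) ∧ X ∈ U ∧ ∅ ∉ U ∧
    (∀ A ∈ U, ∀ B, A ⊆ B → B ⊆ X → B ∈ U) ∧
    (∀ A ∈ U, ∀ B ∈ U, A ∩ B ∈ U) ∧
    (∀ A, A ⊆ X → (A ∈ U ∨ X \ A ∈ U))

/-- `U` is `κ`-complete: closed under intersections of fewer than `κ` of its members. -/
def KComplete (κ : Cardinal.{0}) (X : Set (Set Ordinal)) (U : Set (Set (Set Ordinal))) : Prop :=
  ∀ s : Set (Set (Set Ordinal)), s ⊆ U → #s < Cardinal.lift.{1} κ → X ∩ ⋂₀ s ∈ U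

/-- `U` is fine on `P_κ λ`. -/
def Fine (κ lam : Cardinal) (U : Set (Set (Set Ordinal))) : Prop :=
  ∀ x < lam.ord, {a ∈ Pk κ lam | x ∈ a} ∈ U

/-- `U` is normal on `P_κ λ`: closed under diagonal intersections. -/
def NormalUF (κ lam : Cardinal) (U : Set (Set (Set Ordinal))) : Prop :=
  ∀ A : Ordinal → Set (Set Ordinal), (∀ x < lam.ord, A x ∈ U) →
    {a ∈ Pk κ lam | ∀ x ∈ a, a ∈ A x} ∈ U

/-- `κ` is strongly compact: for every `λ ≥ κ` there is a `κ`-complete fine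
ultrafilter on `P_κ λ`. -/
def IsStronglyCompact (κ : Cardinal) : Prop :=
  ∀ lam : Cardinal, κ ≤ lam →
    ∃ U, IsUFOn (Pk κ lam) U ∧ KComplete κ (Pk κ lam) U ∧ Fine κ lam U

/-- `κ` is supercompact: for every `λ ≥ κ` there is a `κ`-complete normal fine
ultrafilter on `P_κ λ`. -/
def IsSupercompact (κ : Cardinal) : Prop :=
  ∀ lam : Cardinal, κ ≤ lam →
    ∃ U, IsUFOn (Pk κ lam) U ∧ KComplete κ (Pk κ lam) U ∧ Fine κ lam U ∧ NormalUF κ lam U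

/-- `C` is club in the ordinal `o`: unbounded in `o` and closed. -/
def OrdClub (o : Ordinal) (C : Set Ordinal) : Prop :=
  C ⊆ Set.Iio o ∧ (∀ β < o, ∃ γ ∈ C, β ≤ γ) ∧
    ∀ α < o, 0 < α → sSup (C ∩ Set.Iio α) = α → α ∈ C

/-- `S` is stationary in the ordinal `o`. -/
def OrdStat (o : Ordinal) (S : Set Ordinal) : Prop :=
  S ⊆ Set.Iio o ∧ ∀ C, OrdClub o C → (S ∩ C).Nonempty

/-- `δ` is a limit point of `C`: `δ > 0` and `δ = sup (C ∩ δ)`. -/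
def IsLimPt (C : Set Ordinal) (δ : Ordinal) : Prop :=
  0 < δ ∧ sSup (C ∩ Set.Iio δ) = δ

/-- `κ` is an ineffable cardinal. -/
def IsIneffableCard (κ : Cardinal) : Prop :=
  ∀ d : Ordinal → Set Ordinal, (∀ α < κ.ord, d α ⊆ Set.Iio α) →
    ∃ e ⊆ Set.Iio κ.ord, OrdStat κ.ord {α | α < κ.ord ∧ e ∩ Set.Iio α = d α}

/-- A `□_E(κ,λ)`-sequence. -/
def IsSquareSeq (κ : Cardinal.{0}) (lam : Ordinal.{0}) (E : Set Ordinal.{0})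
    (𝒞 : Ordinal.{0} → Set (Set Ordinal.{0})) : Prop :=
  (∀ α, Order.IsSuccLimit α → α ∈ E → α < lam →
    ((𝒞 α).Nonempty ∧ #(𝒞 α) < Cardinal.lift.{1} κ) ∧
      ∀ C ∈ 𝒞 α, OrdClub α C ∧ ∀ β, IsLimPt C β → β ∈ E → C ∩ Set.Iio β ∈ 𝒞 β) ∧
  ¬∃ D, OrdClub lam D ∧ ∀ δ, IsLimPt D δ → δ ∈ E → δ < lam → D ∩ Set.Iio δ ∈ 𝒞 δ

/-- `□_E(κ,λ)` holds. -/
def SquareE (κ : Cardinal.{0}) (lam : Ordinal.{0}) (E : Set Ordinal.{0}) : Prop :=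
  ∃ 𝒞, IsSquareSeq κ lam E 𝒞

/-- `(a, ∈) ≺ (λ, ∈)`: `a` is an elementary substructure of the ordinals below `lam`
(with `∈`, equivalently the order, as the only relation). -/
def ElemSubOrd (lam : Ordinal) (a : Set Ordinal) : Prop :=
  letI := FirstOrder.Language.orderStructure ↥a
  letI := FirstOrder.Language.orderStructure ↥(Set.Iio lam)
  ∃ h : a ⊆ Set.Iio lam,
    ∀ (n : ℕ) (φ : FirstOrder.Language.order.Formula (Fin n)) (v : Fin n → ↥a),
      φ.Realize v ↔ φ.Realize fun i => Set.inclusion h (v i)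

/-- `P'_κ λ`: the members `a` of `P_κ λ` with `a ∩ κ` an ordinal and `(a,∈) ≺ (λ,∈)`. -/
def P'k (κ lam : Cardinal) : Set (Set Ordinal) :=
  {a ∈ Pk κ lam | (∃ β : Ordinal, a ∩ Set.Iio κ.ord = Set.Iio β) ∧ ElemSubOrd lam.ord a}

/-- `κ_a`: the ordinal `a ∩ κ` (for `a ∈ P'_κ λ`). -/
noncomputable def kapOf (κ : Cardinal) (a : Set Ordinal) : Ordinal :=
  sInf {β : Ordinal | a ∩ Set.Iio κ.ord ⊆ Set.Iio β}


theorem ZFSet.toSet_range {ι : Type} (f : ι → ZFSet.{0}) :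
    (ZFSet.range f).toSet = Set.range f := ZFSet.coe_range f

theorem ZFSet.toSet_empty : (∅ : ZFSet.{0}).toSet = ∅ := ZFSet.coe_empty

noncomputable def vN (α : Ordinal.{0}) : ZFSet.{0} :=
  ZFSet.range (fun i : α.ToType => vN (((Ordinal.ToType.mk (o := α)).symm i).1))
termination_by α
decreasing_by exact ((Ordinal.ToType.mk (o := α)).symm i).2

theorem mem_vN {y : ZFSet.{0}} {α : Ordinal.{0}} : y ∈ vN α ↔ ∃ β < α, y = vN β := by
  rw [vN, ZFSet.mem_range]
  constructor
  · rintro ⟨i, rfl⟩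
    exact ⟨_, ((Ordinal.ToType.mk (o := α)).symm i).2, rfl⟩
  · rintro ⟨β, hβ, rfl⟩
    exact ⟨(Ordinal.ToType.mk (o := α)) ⟨β, hβ⟩, by simp⟩

theorem vN_mem_vN_aux {β α : Ordinal.{0}} (h : β < α) : vN β ∈ vN α :=
  mem_vN.2 ⟨β, h, rfl⟩

theorem rank_vN (α : Ordinal.{0}) : (vN α).rank = α := by
  induction α using Ordinal.induction with
  | h α ih =>
    apply le_antisymm
    · rw [ZFSet.rank_le_iff]
      intro y hy
      obtain ⟨β, hβ, rfl⟩ := mem_vN.1 hy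
      rw [ih β hβ]; exact hβ
    · refine le_of_forall_lt fun β hβ => ?_
      have := ZFSet.rank_lt_of_mem (vN_mem_vN_aux hβ)
      rwa [ih β hβ] at this

theorem vN_inj : Function.Injective vN := fun a b h => by
  rw [← rank_vN a, ← rank_vN b, h]

theorem vN_mem_vN {β α : Ordinal.{0}} : vN β ∈ vN α ↔ β < α := by
  constructor
  · intro h
    have := ZFSet.rank_lt_of_mem h
    rwa [rank_vN, rank_vN] at this
  · intro h; exact mem_vN.2 ⟨β, h, rfl⟩

theorem isOrdinal_vN (α : Ordinal.{0}) : (vN α).IsOrdinal := by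
  constructor
  · intro y hy z hz
    obtain ⟨β, hβ, rfl⟩ := mem_vN.1 hy
    obtain ⟨γ, hγ, rfl⟩ := mem_vN.1 hz
    exact vN_mem_vN.2 (hγ.trans hβ)
  · intro y z w hyz hzw hw
    obtain ⟨β, hβ, rfl⟩ := mem_vN.1 hw
    obtain ⟨γ, hγ, rfl⟩ := mem_vN.1 hzw
    obtain ⟨δ, hδ, rfl⟩ := mem_vN.1 hyz
    exact vN_mem_vN.2 (hδ.trans hγ)

theorem ZFSet.IsOrdinal.mem_isOrdinal {x y : ZFSet.{0}} (hx : x.IsOrdinal) (hy : y ∈ x) :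
    y.IsOrdinal := by
  constructor
  · intro a ha b hb
    exact hx.mem_trans' hb ha hy
  · intro a b c hab hbc hcy
    exact hx.mem_trans' hab hbc (hx.isTransitive.mem_trans hcy hy)

/-- Every von Neumann ordinal is `vN` of its rank. -/
theorem eq_vN_rank {y : ZFSet.{0}} (h : y.IsOrdinal) : y = vN y.rank := by
  induction y using ZFSet.inductionOn with
  | h y ih =>
    apply ZFSet.ext
    intro z
    rw [mem_vN]
    constructor
    · intro hz
      exact ⟨z.rank, ZFSet.rank_lt_of_mem hz, ih z hz (h.mem_isOrdinal hz)⟩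
    · rintro ⟨β, hβ, rfl⟩
      obtain ⟨w, hw, hle⟩ := ZFSet.lt_rank_iff.1 hβ
      have hww : w = vN w.rank := ih w hw (h.mem_isOrdinal hw)
      rcases eq_or_lt_of_le hle with heq | hlt
      · rw [heq, ← hww]; exact hw
      · have : vN β ∈ w := by rw [hww]; exact vN_mem_vN.2 hlt
        exact h.isTransitive.mem_trans this hw

theorem isOrdZF_iff {x : ZFSet.{0}} {α : Ordinal.{0}} : IsOrdZF x α ↔ x = vN α := by
  constructor
  · rintro ⟨h, rfl⟩; exact eq_vN_rank h
  · rintro rfl; exact ⟨isOrdinal_vN α, rank_vN α⟩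

theorem codesSet_unique {x : ZFSet.{0}} {b b' : Set Ordinal.{0}}
    (h : CodesSet x b) (h' : CodesSet x b') : b = b' := by
  have key : ∀ b b' : Set Ordinal.{0}, CodesSet x b → CodesSet x b' → b ⊆ b' := by
    intro b b' h h' α hα
    have : vN α ∈ x := (h (vN α)).2 ⟨α, hα, isOrdZF_iff.2 rfl⟩
    obtain ⟨α', hα', hord⟩ := (h' (vN α)).1 this
    rwa [vN_inj (isOrdZF_iff.1 hord)]
  exact subset_antisymm (key _ _ h h') (key _ _ h' h)

theorem vN_mem_HSet {θ : Cardinal.{0}} {α : Ordinal.{0}} (h : α.card < θ) : vN α ∈ HSet θ := by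
  induction α using Ordinal.induction with
  | h α ih =>
    rw [HSet, Set.mem_setOf_eq, ZFSet.hereditarily_iff]
    refine ⟨?_, ?_⟩
    · rw [vN, ZFSet.toSet_range]
      have hle := Cardinal.mk_range_le_lift
        (f := fun i : α.ToType => vN (((Ordinal.ToType.mk (o := α)).symm i).1))
      rw [Cardinal.lift_uzero, Cardinal.mk_toType] at hle
      exact hle.trans_lt (Cardinal.lift_lt.2 h)
    · intro y hy
      obtain ⟨β, hβ, rfl⟩ := mem_vN.1 hy
      exact ih β hβ ((Ordinal.card_le_card hβ.le).trans_lt h)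

theorem exists_code {b : Set Ordinal.{0}} (hb : b.Countable) :
    ∃ x : ZFSet.{0}, CodesSet x b ∧
      ∀ θ : Cardinal.{0}, (∀ α ∈ b, α.card < θ) → ℵ₀ < θ → x ∈ HSet θ := by
  rcases b.eq_empty_or_nonempty with rfl | hne
  · refine ⟨∅, fun y => ?_, fun θ _ hθ => ?_⟩
    · simp [ZFSet.notMem_empty]
    · rw [HSet, Set.mem_setOf_eq, ZFSet.hereditarily_iff]
      refine ⟨?_, fun y hy => absurd hy (ZFSet.notMem_empty y)⟩
      have : #(∅ : ZFSet.{0}).toSet = 0 := by simp [ZFSet.toSet_empty]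
      rw [this]
      exact (Cardinal.lift_lt.2 hθ).trans_le' (by simp)
  · obtain ⟨f, rfl⟩ := hb.exists_eq_range hne
    refine ⟨ZFSet.range fun n => vN (f n), fun y => ?_, fun θ hcard hθ => ?_⟩
    · rw [ZFSet.mem_range]
      constructor
      · rintro ⟨n, rfl⟩
        exact ⟨f n, Set.mem_range_self n, isOrdZF_iff.2 rfl⟩
      · rintro ⟨α, ⟨n, rfl⟩, hy⟩
        exact ⟨n, (isOrdZF_iff.1 hy).symm⟩
    · rw [HSet, Set.mem_setOf_eq, ZFSet.hereditarily_iff]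
      refine ⟨?_, fun y hy => ?_⟩
      · rw [ZFSet.toSet_range]
        have hle := Cardinal.mk_range_le_lift (f := fun n : ℕ => vN (f n))
        rw [Cardinal.lift_uzero, Cardinal.mk_nat] at hle
        exact hle.trans_lt (Cardinal.lift_lt.2 hθ)
      · rw [ZFSet.mem_range] at hy
        obtain ⟨n, rfl⟩ := hy
        exact vN_mem_HSet (hcard (f n) (Set.mem_range_self n))

open Classical in
noncomputable def codeSet (b : Set Ordinal.{0}) : ZFSet.{0} :=
  if hb : b.Countable then (exists_code hb).choose else ∅

theorem codesSet_codeSet {b : Set Ordinal.{0}} (hb : b.Countable) : CodesSet (codeSet b) b := by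
  rw [codeSet, dif_pos hb]
  exact (exists_code hb).choose_spec.1

theorem codeSet_mem_HSet {θ : Cardinal.{0}} {b : Set Ordinal.{0}} (hb : b.Countable)
    (hcard : ∀ α ∈ b, α.card < θ) (hθ : ℵ₀ < θ) : codeSet b ∈ HSet θ := by
  rw [codeSet, dif_pos hb]
  exact (exists_code hb).choose_spec.2 θ hcard hθ

theorem isRegular_lift {κ : Cardinal.{0}} (h : κ.IsRegular) :
    (Cardinal.lift.{1} κ).IsRegular := by
  refine ⟨Cardinal.aleph0_le_lift.2 h.1, ?_⟩
  rw [← Cardinal.lift_ord, ← Ordinal.lift_cof]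
  exact Cardinal.lift_le.2 h.2

theorem mk_biUnion_lt {κ : Cardinal.{0}} (hreg : κ.IsRegular) {ι X : Type 1} {s : Set ι}
    {g : ι → Set X} (hs : #s < Cardinal.lift.{1} κ)
    (hg : ∀ i ∈ s, #(g i) < Cardinal.lift.{1} κ) :
    #(⋃ i ∈ s, g i) < Cardinal.lift.{1} κ := by
  refine (Cardinal.mk_biUnion_le g s).trans_lt ?_
  apply Cardinal.mul_lt_of_lt (Cardinal.aleph0_le_lift.2 hreg.1) hs
  exact Cardinal.iSup_lt_of_isRegular (isRegular_lift hreg) hs fun i => hg i i.2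

theorem ordsOf_eq (lam : Cardinal) (M : Set ZFSet.{0}) :
    ordsOf lam M = {α | α < lam.ord ∧ vN α ∈ M} := by
  ext α
  simp only [ordsOf, Set.mem_setOf_eq]
  refine and_congr_right fun _ => ⟨?_, fun h => ⟨vN α, h, isOrdZF_iff.2 rfl⟩⟩
  rintro ⟨x, hx, hord⟩
  rwa [isOrdZF_iff.1 hord] at hx

theorem mk_ordsOf_le (lam : Cardinal) (M : Set ZFSet.{0}) : #(ordsOf lam M) ≤ #M := by
  have key : ∀ α : ordsOf lam M, vN α.1 ∈ M := by
    rintro ⟨α, hα⟩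
    rw [ordsOf_eq] at hα
    exact hα.2
  apply Cardinal.mk_le_of_injective (f := fun α : ordsOf lam M => (⟨vN α.1, key α⟩ : M))
  intro a b h
  exact Subtype.ext (vN_inj (congrArg Subtype.val h))

theorem countable_lt_lift {κ : Cardinal.{0}} (hunc : ℵ₀ < κ) {b : Set Ordinal.{0}}
    (hb : b.Countable) : #b < Cardinal.lift.{1} κ := by
  have : #b ≤ ℵ₀ := by
    have := hb.to_subtype
    exact Cardinal.mk_le_aleph0
  refine this.trans_lt ?_
  rw [← Cardinal.lift_aleph0.{1, 0}]
  exact Cardinal.lift_lt.2 hunc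

theorem isSlender_of_isThin {κ lam : Cardinal.{0}} (hreg : κ.IsRegular) (hunc : ℵ₀ < κ)
    (hle : κ ≤ lam) {d : Set Ordinal → Set Ordinal} (hlist : IsList κ lam d)
    (hthin : IsThin κ lam d) : IsSlender κ lam d := by
  classical
  obtain ⟨C₀, ⟨hC₀sub, hC₀cof, _⟩, hsmall⟩ := hthin
  refine ⟨Order.succ lam, fun θ hθ hθreg => ?_⟩
  have hlamθ : lam < θ := lt_of_lt_of_le (Order.lt_succ lam) hθ
  have hcardθ : ∀ α < lam.ord, α.card < θ := fun α hα =>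
    lt_of_le_of_lt (by simpa using Ordinal.card_le_card hα.le) hlamθ
  have hℵθ : ℵ₀ < θ := lt_of_le_of_lt (hunc.le.trans hle) hlamθ
  have hℵκ : ℵ₀ < Cardinal.lift.{1} κ := by
    rw [← Cardinal.lift_aleph0.{1, 0}]; exact Cardinal.lift_lt.2 hunc
  set S : Set (Set ZFSet.{0}) :=
    {M : Set ZFSet.{0} | M ⊆ HSet θ ∧ #M < Cardinal.lift.{1} κ} with hS
  set P : Set ZFSet.{0} → Prop := fun M =>
    ∀ b : Set Ordinal, b.Countable → (∀ α ∈ b, α < lam.ord) → (∃ x ∈ M, CodesSet x b) →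
      ∃ c ∈ C₀, b ⊆ c ∧ (∀ α ∈ c, vN α ∈ M) ∧
        ∀ e, (∃ a ∈ Pk κ lam, c ⊆ a ∧ e = d a ∩ c) → ∃ x ∈ M, CodesSet x (e ∩ b) with hP
  have hPmono : ∀ M M' : Set ZFSet.{0}, M ⊆ M' → ∀ b, b.Countable → (∀ α ∈ b, α < lam.ord) →
      (∃ c ∈ C₀, b ⊆ c ∧ (∀ α ∈ c, vN α ∈ M) ∧
        ∀ e, (∃ a ∈ Pk κ lam, c ⊆ a ∧ e = d a ∩ c) → ∃ x ∈ M, CodesSet x (e ∩ b)) →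
      ∃ c ∈ C₀, b ⊆ c ∧ (∀ α ∈ c, vN α ∈ M') ∧
        ∀ e, (∃ a ∈ Pk κ lam, c ⊆ a ∧ e = d a ∩ c) → ∃ x ∈ M', CodesSet x (e ∩ b) := by
    rintro M M' hMM b _ _ ⟨c, hc, hbc, hvN, hcodes⟩
    refine ⟨c, hc, hbc, fun α hα => hMM (hvN α hα), fun e he => ?_⟩
    obtain ⟨x, hx, hxc⟩ := hcodes e he
    exact ⟨x, hMM hx, hxc⟩
  refine ⟨{M ∈ S | P M}, ⟨fun M hM => hM.1, ?_, ?_⟩, ?_⟩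
  · -- cofinality
    intro M₀ hM₀
    have hcws : ∀ b : Set Ordinal, ∃ c, b.Countable → (∀ α ∈ b, α < lam.ord) →
        c ∈ C₀ ∧ b ⊆ c := by
      intro b
      by_cases h : b.Countable ∧ ∀ α ∈ b, α < lam.ord
      · obtain ⟨c, hc, hbc⟩ := hC₀cof b ⟨h.2, countable_lt_lift hunc h.1⟩
        exact ⟨c, fun _ _ => ⟨hc, hbc⟩⟩
      · exact ⟨∅, fun h1 h2 => absurd ⟨h1, h2⟩ h⟩
    choose cws hcws using hcws
    set B : Set ZFSet.{0} → Set (Set Ordinal) := fun M =>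
      {b : Set Ordinal | b.Countable ∧ (∀ α ∈ b, α < lam.ord) ∧ ∃ x ∈ M, CodesSet x b}
      with hB
    set T : Set Ordinal → Set ZFSet.{0} := fun b =>
      (vN '' cws b) ∪ (codeSet '' ((fun e => e ∩ b) ''
        {x : Set Ordinal | ∃ a ∈ Pk κ lam, cws b ⊆ a ∧ x = d a ∩ cws b})) with hT
    set step : Set ZFSet.{0} → Set ZFSet.{0} := fun M => M ∪ ⋃ b ∈ B M, T b with hstep
    have hBle : ∀ M : Set ZFSet.{0}, #(B M) ≤ #M := by
      intro M
      have key : ∀ b : B M, ∃ x, x ∈ M ∧ CodesSet x b.1 := fun b => b.2.2.2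
      choose g hg1 hg2 using key
      apply Cardinal.mk_le_of_injective (f := fun b : B M => (⟨g b, hg1 b⟩ : M))
      intro b b' h
      have hgeq : g b = g b' := congrArg Subtype.val h
      exact Subtype.ext (codesSet_unique (hg2 b) (hgeq ▸ hg2 b'))
    have hTS : ∀ b ∈ B (Set.univ : Set ZFSet.{0}) ∪ B ∅ ∪ {b | b.Countable ∧
        ∀ α ∈ b, α < lam.ord}, True := fun _ _ => trivial
    have hTsub : ∀ b : Set Ordinal, b.Countable → (∀ α ∈ b, α < lam.ord) →
        T b ⊆ HSet θ ∧ #(T b) < Cardinal.lift.{1} κ := by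
      intro b hb1 hb2
      obtain ⟨hcC₀, hbc⟩ := hcws b hb1 hb2
      have hcPk : cws b ∈ Pk κ lam := hC₀sub hcC₀
      constructor
      · rintro x (⟨α, hα, rfl⟩ | ⟨e', ⟨e, he, rfl⟩, rfl⟩)
        · exact vN_mem_HSet (hcardθ α (hcPk.1 α hα))
        · refine codeSet_mem_HSet (hb1.mono Set.inter_subset_right)
            (fun α hα => hcardθ α (hb2 α hα.2)) hℵθ
      · refine (Cardinal.mk_union_le _ _).trans_lt
          (Cardinal.add_lt_of_lt hℵκ.le ?_ ?_)
        · exact (Cardinal.mk_image_le).trans_lt hcPk.2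
        · exact (Cardinal.mk_image_le).trans_lt
            ((Cardinal.mk_image_le).trans_lt (hsmall (cws b) hcC₀))
    have hstepS : ∀ M ∈ S, step M ∈ S := by
      intro M hM
      constructor
      · rintro x (hx | hx)
        · exact hM.1 hx
        · obtain ⟨b, hb, hxT⟩ := by simpa using hx
          exact (hTsub b hb.1 hb.2.1).1 hxT
      · refine (Cardinal.mk_union_le _ _).trans_lt
          (Cardinal.add_lt_of_lt hℵκ.le hM.2 ?_)
        refine mk_biUnion_lt hreg ((hBle M).trans_lt hM.2) ?_
        intro b hb
        exact (hTsub b hb.1 hb.2.1).2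
    set F : ℕ → Set ZFSet.{0} := fun n => step^[n] M₀ with hF
    have hFS : ∀ n, F n ∈ S := by
      intro n
      induction n with
      | zero => exact hM₀
      | succ n ih =>
        rw [hF]
        simp only [Function.iterate_succ_apply']
        exact hstepS _ ih
    have hFsucc : ∀ n, F n ⊆ F (n + 1) := by
      intro n
      rw [hF]
      simp only [Function.iterate_succ_apply']
      exact Set.subset_union_left
    set Mf : Set ZFSet.{0} := ⋃ n, F n with hMf
    have hFM : ∀ n, F n ⊆ Mf := fun n => Set.subset_iUnion F n
    refine ⟨Mf, ⟨⟨?_, ?_⟩, ?_⟩, hFM 0⟩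
    · intro x hx
      obtain ⟨n, hn⟩ := Set.mem_iUnion.1 hx
      exact (hFS n).1 hn
    · have hMfle := Cardinal.mk_iUnion_le_lift F
      rw [Cardinal.lift_uzero] at hMfle
      refine hMfle.trans_lt ?_
      apply Cardinal.mul_lt_of_lt hℵκ.le
      · rw [Cardinal.mk_nat, Cardinal.lift_aleph0]; exact hℵκ
      · refine Cardinal.iSup_lt_lift_of_isRegular (isRegular_lift hreg) ?_ ?_
        · rw [Cardinal.mk_nat, Cardinal.lift_aleph0]; exact hℵκ
        · intro n
          rw [Cardinal.lift_uzero]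
          exact (hFS n).2
    · intro b hb1 hb2 hbcode
      obtain ⟨x, hx, hcode⟩ := hbcode
      obtain ⟨n, hn⟩ := Set.mem_iUnion.1 hx
      have hbB : b ∈ B (F n) := ⟨hb1, hb2, x, hn, hcode⟩
      have hTsubM : T b ⊆ Mf := by
        refine Set.Subset.trans ?_ (hFM (n + 1))
        rw [hF]
        simp only [Function.iterate_succ_apply']
        exact Set.Subset.trans (Set.subset_biUnion_of_mem hbB) Set.subset_union_right
      obtain ⟨hcC₀, hbc⟩ := hcws b hb1 hb2
      refine ⟨cws b, hcC₀, hbc, ?_, ?_⟩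
      · intro α hα
        exact hTsubM (Set.mem_union_left _ ⟨α, hα, rfl⟩)
      · intro e he
        refine ⟨codeSet (e ∩ b), hTsubM (Set.mem_union_right _ ⟨e ∩ b, ⟨e, he, rfl⟩, rfl⟩), ?_⟩
        exact codesSet_codeSet (hb1.mono Set.inter_subset_right)
  · -- closure under chains
    intro δ hδ0 hδκ f hf hmono
    have hsub : ∀ β < δ, f β ⊆ ⋃ β ∈ Set.Iio δ, f β := by
      intro β hβ
      exact Set.subset_biUnion_of_mem hβ
    refine ⟨⟨?_, ?_⟩, ?_⟩
    · intro x hx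
      obtain ⟨β, hβ, hxf⟩ := by simpa using hx
      exact (hf β hβ).1.1 hxf
    · refine mk_biUnion_lt hreg ?_ fun β hβ => (hf β hβ).1.2
      rw [Ordinal.mk_Iio_ordinal]
      exact Cardinal.lift_lt.2 hδκ
    · intro b hbctble hblam ⟨x, hx, hcode⟩
      obtain ⟨β, hβ, hxf⟩ := by simpa using hx
      exact hPmono _ _ (hsub β hβ) b hbctble hblam
        ((hf β hβ).2 b hbctble hblam ⟨x, hxf, hcode⟩)
  · -- the slender property
    intro M hM b hbctble hblam hbcode
    obtain ⟨c, hcC₀, hbc, hvN, hcodes⟩ := hM.2 b hbctble hblam hbcode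
    have hcPk : c ∈ Pk κ lam := hC₀sub hcC₀
    have haPk : ordsOf lam M ∈ Pk κ lam := by
      constructor
      · intro α hα
        rw [ordsOf_eq] at hα
        exact hα.1
      · exact (mk_ordsOf_le lam M).trans_lt hM.1.2
    have hca : c ⊆ ordsOf lam M := by
      intro α hα
      rw [ordsOf_eq]
      exact ⟨hcPk.1 α hα, hvN α hα⟩
    obtain ⟨x, hxM, hxcode⟩ := hcodes (d (ordsOf lam M) ∩ c) ⟨ordsOf lam M, haPk, hca, rfl⟩
    refine ⟨x, hxM, ?_⟩
    have : d (ordsOf lam M) ∩ c ∩ b = d (ordsOf lam M) ∩ b := by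
      rw [Set.inter_assoc, Set.inter_eq_right.2 hbc]
    rwa [this] at hxcode

theorem IIT_subset_IIS (κ lam : Cardinal.{0})
    (hreg : κ.IsRegular) (hunc : ℵ₀ < κ) (hle : κ ≤ lam) :
    IIT κ lam ⊆ IIS κ lam := by
  rintro A ⟨hA, d, hlist, hthin, heff⟩
  exact ⟨hA, d, hlist, isSlender_of_isThin hreg hunc hle hlist hthin, heff⟩
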